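/- Let f: ℝᵈ → ℝ be convex, differentiable, and L-smooth, and let {x_k} be generated by MAG with step size η_k = (f(x_k) - f*)/‖d_k‖². Then for every k ≥ 2, ⟨d_{k-1}, x_k - x*⟩ ≥ (1/(2L)) ∑_{i=1}^{k-1} β^{k-1-i} ‖∇f(x_i)‖². -/

import Mathlib

open Finset
open scoped RealInnerProductSpace

/-- ALR-MAG on a convex `L`-smooth function: lower bound on the inner product of
the averaged direction with the direction to the minimizer. -/
theorem alr_mag_smooth_inner_lower_bound
    {E : Type*} [NormedAddCommGroup E] [InnerProductSpace ℝ E]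
    (f : E → ℝ) (g : E → E) (L : ℝ) (hL : 0 < L)
    (hconv : ∀ y z : E, f y + ⟪g y, z - y⟫ ≤ f z)
    (hsmooth : ∀ y z : E, f z ≤ f y + ⟪g y, z - y⟫ + L / 2 * ‖z - y‖ ^ 2)
    (xstar : E) (fstar : ℝ) (hfstar : fstar = f xstar)
    (hmin : ∀ y : E, f xstar ≤ f y)
    (β : ℝ) (hβ : β ∈ Set.Ioo (0 : ℝ) 1)
    (x d : ℕ → E) (η : ℕ → ℝ)
    (hd0 : d 0 = 0)
    (hd : ∀ k, 1 ≤ k → d k = g (x k) + β • d (k - 1))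
    (hdne : ∀ k, 1 ≤ k → d k ≠ 0)
    (hη : ∀ k, 1 ≤ k → η k = (f (x k) - fstar) / ‖d k‖ ^ 2)
    (hx : ∀ k, 1 ≤ k → x (k + 1) = x k - η k • d k) :
    ∀ k, 2 ≤ k →
      (1 / (2 * L)) * ∑ i ∈ Icc 1 (k - 1), β ^ (k - 1 - i) * ‖g (x i)‖ ^ 2
        ≤ ⟪d (k - 1), x k - xstar⟫ := by
  have hLne : L ≠ 0 := ne_of_gt hL
  -- g xstar = 0
  have gstar : g xstar = 0 := by
    have h := hsmooth xstar (xstar - L⁻¹ • g xstar)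
    have hz : xstar - L⁻¹ • g xstar - xstar = -(L⁻¹ • g xstar) := by abel
    rw [hz] at h
    have h1 : ⟪g xstar, -(L⁻¹ • g xstar)⟫ = -(L⁻¹ * ‖g xstar‖^2) := by
      rw [inner_neg_right, real_inner_smul_right, real_inner_self_eq_norm_sq]
    have h2 : ‖-(L⁻¹ • g xstar)‖^2 = L⁻¹^2 * ‖g xstar‖^2 := by
      rw [norm_neg, norm_smul, mul_pow]
      simp [abs_of_pos (inv_pos.mpr hL)]
    rw [h1, h2] at h
    have h3 := hmin (xstar - L⁻¹ • g xstar)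
    have e : L / 2 * (L⁻¹^2 * ‖g xstar‖^2) = L⁻¹/2 * ‖g xstar‖^2 := by
      field_simp
    rw [e] at h
    have hle : L⁻¹ * ‖g xstar‖^2 ≤ 0 := by linarith
    have : ‖g xstar‖^2 = 0 := by
      nlinarith [inv_pos.mpr hL, sq_nonneg ‖g xstar‖]
    simpa using this
  -- key inequality
  have key : ∀ y : E, f y - fstar + 1/(2*L) * ‖g y‖^2 ≤ ⟪g y, y - xstar⟫ := by
    intro y
    set w := xstar + L⁻¹ • g y with hw
    have h1 := hconv y w
    have h2 := hsmooth xstar w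
    have hw1 : w - xstar = L⁻¹ • g y := by rw [hw]; abel
    rw [hw1, gstar] at h2
    simp only [inner_zero_left] at h2
    have h2' : f w ≤ f xstar + L / 2 * (L⁻¹^2 * ‖g y‖^2) := by
      have : ‖L⁻¹ • g y‖^2 = L⁻¹^2 * ‖g y‖^2 := by
        rw [norm_smul, mul_pow]; simp [abs_of_pos (inv_pos.mpr hL)]
      nlinarith []
    have hw2 : w - y = (xstar - y) + L⁻¹ • g y := by rw [hw]; abel
    rw [hw2, inner_add_right, real_inner_smul_right, real_inner_self_eq_norm_sq] at h1
    have h4 : ⟪g y, y - xstar⟫ = -⟪g y, xstar - y⟫ := by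
      rw [← inner_neg_right]; congr 1; abel
    rw [h4, hfstar]
    have e1 : L / 2 * (L⁻¹^2 * ‖g y‖^2) = L⁻¹/2 * ‖g y‖^2 := by
      field_simp
    have e2 : 1/(2*L) * ‖g y‖^2 = L⁻¹/2 * ‖g y‖^2 := by
      rw [one_div, mul_inv]; ring
    rw [e1] at h2'
    rw [e2]
    linarith [h1, h2']
  have hβ0 : 0 < β := hβ.1
  -- main induction
  have main : ∀ k, 1 ≤ k →
      (1 / (2 * L)) * ∑ i ∈ Icc 1 k, β ^ (k - i) * ‖g (x i)‖ ^ 2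
        ≤ ⟪d k, x (k + 1) - xstar⟫ := by
    intro k hk
    induction k, hk using Nat.le_induction with
    | base =>
      have hstep : ⟪d 1, x 2 - xstar⟫
          = ⟪d 1, x 1 - xstar⟫ - (f (x 1) - fstar) := by
        rw [hx 1 le_rfl]
        have : x 1 - η 1 • d 1 - xstar = (x 1 - xstar) - η 1 • d 1 := by abel
        rw [this, inner_sub_right, real_inner_smul_right, real_inner_self_eq_norm_sq,
          hη 1 le_rfl]
        have hne : ‖d 1‖^2 ≠ 0 := by
          simpa [pow_eq_zero_iff] using hdne 1 le_rfl
        field_simp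
        rw [mul_div_assoc, div_self (norm_ne_zero_iff.mpr (hdne 1 le_rfl)), mul_one]
      have hd1 : d 1 = g (x 1) := by rw [hd 1 le_rfl]; simp [hd0]
      rw [hstep, hd1]
      have := key (x 1)
      simp only [Icc_self, sum_singleton, Nat.sub_self, pow_zero, one_mul]
      linarith
    | succ n hn ih =>
      -- step from n to n+1
      have hn1 : 1 ≤ n + 1 := by omega
      have hstep : ⟪d (n+1), x (n+2) - xstar⟫
          = ⟪d (n+1), x (n+1) - xstar⟫ - (f (x (n+1)) - fstar) := by
        rw [hx (n+1) hn1]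
        have : x (n+1) - η (n+1) • d (n+1) - xstar = (x (n+1) - xstar) - η (n+1) • d (n+1) := by abel
        rw [this, inner_sub_right, real_inner_smul_right, real_inner_self_eq_norm_sq,
          hη (n+1) hn1]
        have hne : ‖d (n+1)‖^2 ≠ 0 := by
          simpa [pow_eq_zero_iff] using hdne (n+1) hn1
        field_simp
        rw [mul_div_assoc, div_self (norm_ne_zero_iff.mpr (hdne (n+1) hn1)), mul_one]
      have hsplit : ⟪d (n+1), x (n+1) - xstar⟫
          = ⟪g (x (n+1)), x (n+1) - xstar⟫ + β * ⟪d n, x (n+1) - xstar⟫ := by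
        rw [hd (n+1) hn1]
        simp only [Nat.add_sub_cancel]
        rw [inner_add_left, real_inner_smul_left]
      -- sum reindex
      have hsum : ∑ i ∈ Icc 1 (n+1), β ^ (n + 1 - i) * ‖g (x i)‖ ^ 2
          = ‖g (x (n+1))‖^2 + β * ∑ i ∈ Icc 1 n, β ^ (n - i) * ‖g (x i)‖ ^ 2 := by
        rw [Finset.sum_Icc_succ_top (by omega : 1 ≤ n + 1), Nat.sub_self, pow_zero, one_mul,
          add_comm, mul_sum]
        congr 1
        apply sum_congr rfl
        intro i hi
        simp only [mem_Icc] at hi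
        rw [show n + 1 - i = (n - i) + 1 by omega, pow_succ]
        ring
      rw [hstep, hsplit, hsum]
      have hkey := key (x (n+1))
      have hβih : β * ((1 / (2 * L)) * ∑ i ∈ Icc 1 n, β ^ (n - i) * ‖g (x i)‖ ^ 2)
          ≤ β * ⟪d n, x (n+1) - xstar⟫ := by
        exact mul_le_mul_of_nonneg_left ih (le_of_lt hβ0)
      nlinarith [hkey, hβih]
  intro k hk
  obtain ⟨m, rfl⟩ : ∃ m, k = m + 1 := ⟨k - 1, by omega⟩
  have hm : 1 ≤ m := by omega
  simpa using main m hm
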